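/- In H³, every non-simple bivector Λ satisfies (Λ∧Λ)² < 0 (as a scalar), and hence Λ decomposes uniquely as a sum Λ = Λ₁ + Λ₂ of two commuting simple bivectors (axes) with Λ₁,₂² = ½(Λ·Λ ± √((Λ·Λ)² - (Λ∧Λ)²)), one of which is proper (Λ₁² < 0) and the other improper (Λ₂² > 0). -/

import Mathlib

set_option maxHeartbeats 4000000

/-- Bivector with coefficients `q = (p₁₀,p₂₀,p₃₀,p₂₃,p₃₁,p₁₂)` in the
Clifford model of `H³`. -/
def bivH3 {A : Type*} [Ring A] [Algebra ℝ A] (e0 e1 e2 e3 : A)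
    (q : Fin 6 → ℝ) : A :=
  q 0 • (e1 * e0) + q 1 • (e2 * e0) + q 2 • (e3 * e0) +
    q 3 • (e2 * e3) + q 4 • (e3 * e1) + q 5 • (e1 * e2)

/-- Plücker expression `p₁₀p₂₃ + p₂₀p₃₁ + p₃₀p₁₂`; the bivector is simple iff
it vanishes, and `Λ∧Λ = -2·pluckH3·I`. -/
def pluckH3 (q : Fin 6 → ℝ) : ℝ := q 0 * q 3 + q 1 * q 4 + q 2 * q 5

/-- Scalar part `Λ·Λ` of the square of the bivector with coefficients `q`. -/
def sqH3 (q : Fin 6 → ℝ) : ℝ :=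
  q 0 ^ 2 + q 1 ^ 2 + q 2 ^ 2 - q 3 ^ 2 - q 4 ^ 2 - q 5 ^ 2

lemma indep6 {A : Type*} [Ring A] [Algebra ℝ A] (e0 e1 e2 e3 : A)
    (h00 : e0 * e0 = -1) (h11 : e1 * e1 = 1) (h22 : e2 * e2 = 1)
    (h33 : e3 * e3 = 1)
    (h01 : e0 * e1 = -(e1 * e0)) (h02 : e0 * e2 = -(e2 * e0))
    (h03 : e0 * e3 = -(e3 * e0)) (h12 : e1 * e2 = -(e2 * e1))
    (h13 : e1 * e3 = -(e3 * e1)) (h23 : e2 * e3 = -(e3 * e2))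
    (hinj : Function.Injective (algebraMap ℝ A))
    (c0 c1 c2 c3 c4 c5 : ℝ)
    (h : c0 • (e1*e0) + c1 • (e2*e0) + c2 • (e3*e0) + c3 • (e2*e3) + c4 • (e3*e1) + c5 • (e1*e2) = 0) :
    c0 = 0 ∧ c1 = 0 ∧ c2 = 0 ∧ c3 = 0 ∧ c4 = 0 ∧ c5 = 0 := by
  have s01 : ∀ x : A, e0*(e1*x) = -(e1*(e0*x)) := fun x => by
    rw [← mul_assoc, h01, neg_mul, mul_assoc]
  have s02 : ∀ x : A, e0*(e2*x) = -(e2*(e0*x)) := fun x => by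
    rw [← mul_assoc, h02, neg_mul, mul_assoc]
  have s03 : ∀ x : A, e0*(e3*x) = -(e3*(e0*x)) := fun x => by
    rw [← mul_assoc, h03, neg_mul, mul_assoc]
  have s12 : ∀ x : A, e1*(e2*x) = -(e2*(e1*x)) := fun x => by
    rw [← mul_assoc, h12, neg_mul, mul_assoc]
  have s13 : ∀ x : A, e1*(e3*x) = -(e3*(e1*x)) := fun x => by
    rw [← mul_assoc, h13, neg_mul, mul_assoc]
  have s23 : ∀ x : A, e2*(e3*x) = -(e3*(e2*x)) := fun x => by
    rw [← mul_assoc, h23, neg_mul, mul_assoc]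
  have m00 : ∀ x : A, e0*(e0*x) = -x := fun x => by
    rw [← mul_assoc, h00, neg_one_mul]
  have m11 : ∀ x : A, e1*(e1*x) = x := fun x => by
    rw [← mul_assoc, h11, one_mul]
  have m22 : ∀ x : A, e2*(e2*x) = x := fun x => by
    rw [← mul_assoc, h22, one_mul]
  have m33 : ∀ x : A, e3*(e3*x) = x := fun x => by
    rw [← mul_assoc, h33, one_mul]
  have key : ∀ d : ℝ, algebraMap ℝ A d = 0 → d = 0 := fun d hd =>
    hinj (hd.trans (map_zero (algebraMap ℝ A)).symm)
  have E0 : ((c0 • (e1*e0) + c1 • (e2*e0) + c2 • (e3*e0) + c3 • (e2*e3) + c4 • (e3*e1) + c5 • (e1*e2)) + e0*(c0 • (e1*e0) + c1 • (e2*e0) + c2 • (e3*e0) + c3 • (e2*e3) + c4 • (e3*e1) + c5 • (e1*e2))*e0 - e1*(c0 • (e1*e0) + c1 • (e2*e0) + c2 • (e3*e0) + c3 • (e2*e3) + c4 • (e3*e1) + c5 • (e1*e2))*e1 - e0*(e1*(c0 • (e1*e0) + c1 • (e2*e0) + c2 • (e3*e0) + c3 • (e2*e3) + c4 • (e3*e1)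 + c5 • (e1*e2))*e1)*e0) * (e1*e0) = algebraMap ℝ A (4*c0) := by
    rw [Algebra.algebraMap_eq_smul_one]
    simp only [mul_add, add_mul, sub_mul, mul_sub, mul_neg, neg_mul, neg_neg,
      smul_mul_assoc, mul_smul_comm, mul_assoc, s01, s02, s03, s12, s13, s23,
      m00, m11, m22, m33, h00, h11, h22, h33, h01, h02, h03, h12, h13, h23,
      mul_one, one_mul, smul_neg]
    module
  rw [h] at E0
  simp only [mul_zero, zero_mul, add_zero, zero_add, sub_zero, neg_zero, sub_self] at E0
  have hz0 : c0 = 0 := by have := key _ E0.symm; linarith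
  have E1 : ((c0 • (e1*e0) + c1 • (e2*e0) + c2 • (e3*e0) + c3 • (e2*e3) + c4 • (e3*e1) + c5 • (e1*e2)) + e0*(c0 • (e1*e0) + c1 • (e2*e0) + c2 • (e3*e0) + c3 • (e2*e3) + c4 • (e3*e1) + c5 • (e1*e2))*e0 - e2*(c0 • (e1*e0) + c1 • (e2*e0) + c2 • (e3*e0) + c3 • (e2*e3) + c4 • (e3*e1) + c5 • (e1*e2))*e2 - e0*(e2*(c0 • (e1*e0) + c1 • (e2*e0) + c2 • (e3*e0) + c3 • (e2*e3) + c4 • (e3*e1) + c5 • (e1*e2))*e2)*e0) * (e2*e0) = algebraMap ℝ A (4*c1) := by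
    rw [Algebra.algebraMap_eq_smul_one]
    simp only [mul_add, add_mul, sub_mul, mul_sub, mul_neg, neg_mul, neg_neg,
      smul_mul_assoc, mul_smul_comm, mul_assoc, s01, s02, s03, s12, s13, s23,
      m00, m11, m22, m33, h00, h11, h22, h33, h01, h02, h03, h12, h13, h23,
      mul_one, one_mul, smul_neg]
    module
  rw [h] at E1
  simp only [mul_zero, zero_mul, add_zero, zero_add, sub_zero, neg_zero, sub_self] at E1
  have hz1 : c1 = 0 := by have := key _ E1.symm; linarith
  have E2 : ((c0 • (e1*e0) + c1 • (e2*e0) + c2 • (e3*e0) + c3 • (e2*e3) + c4 • (e3*e1) + c5 • (e1*e2)) + e0*(c0 • (e1*e0) + c1 • (e2*e0) + c2 • (e3*e0) + c3 • (e2*e3) + c4 • (e3*e1) + c5 • (e1*e2))*e0 - e3*(c0 • (e1*e0) + c1 • (e2*e0) + c2 • (e3*e0) + c3 • (e2*e3) + c4 • (e3*e1) + c5 • (e1*e2))*e3 - e0*(e3*(c0 • (e1*e0) + c1 • (e2*e0) + c2 • (e3*e0) + c3 • (e2*e3) + c4 • (e3*e1) + c5 • (e1*e2))*e3)*e0) *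 (e3*e0) = algebraMap ℝ A (4*c2) := by
    rw [Algebra.algebraMap_eq_smul_one]
    simp only [mul_add, add_mul, sub_mul, mul_sub, mul_neg, neg_mul, neg_neg,
      smul_mul_assoc, mul_smul_comm, mul_assoc, s01, s02, s03, s12, s13, s23,
      m00, m11, m22, m33, h00, h11, h22, h33, h01, h02, h03, h12, h13, h23,
      mul_one, one_mul, smul_neg]
    module
  rw [h] at E2
  simp only [mul_zero, zero_mul, add_zero, zero_add, sub_zero, neg_zero, sub_self] at E2
  have hz2 : c2 = 0 := by have := key _ E2.symm; linarith
  have E3 : ((c0 • (e1*e0) + c1 • (e2*e0) + c2 • (e3*e0) + c3 • (e2*e3) + c4 • (e3*e1) + c5 • (e1*e2)) - e2*(c0 • (e1*e0) + c1 • (e2*e0) + c2 • (e3*e0) + c3 • (e2*e3) + c4 • (e3*e1) + c5 • (e1*e2))*e2 - e3*(c0 • (e1*e0) + c1 • (e2*e0) + c2 • (e3*e0) + c3 • (e2*e3) + c4 • (e3*e1) + c5 • (e1*e2))*e3 + e2*(e3*(c0 • (e1*e0) + c1 • (e2*e0) + c2 • (e3*e0) + c3 • (e2*e3) + c4 • (e3*e1)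 + c5 • (e1*e2))*e3)*e2) * (e2*e3) = algebraMap ℝ A (-(4*c3)) := by
    rw [Algebra.algebraMap_eq_smul_one]
    simp only [mul_add, add_mul, sub_mul, mul_sub, mul_neg, neg_mul, neg_neg,
      smul_mul_assoc, mul_smul_comm, mul_assoc, s01, s02, s03, s12, s13, s23,
      m00, m11, m22, m33, h00, h11, h22, h33, h01, h02, h03, h12, h13, h23,
      mul_one, one_mul, smul_neg]
    module
  rw [h] at E3
  simp only [mul_zero, zero_mul, add_zero, zero_add, sub_zero, neg_zero, sub_self] at E3
  have hz3 : c3 = 0 := by have := key _ E3.symm; linarith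
  have E4 : ((c0 • (e1*e0) + c1 • (e2*e0) + c2 • (e3*e0) + c3 • (e2*e3) + c4 • (e3*e1) + c5 • (e1*e2)) - e1*(c0 • (e1*e0) + c1 • (e2*e0) + c2 • (e3*e0) + c3 • (e2*e3) + c4 • (e3*e1) + c5 • (e1*e2))*e1 - e3*(c0 • (e1*e0) + c1 • (e2*e0) + c2 • (e3*e0) + c3 • (e2*e3) + c4 • (e3*e1) + c5 • (e1*e2))*e3 + e1*(e3*(c0 • (e1*e0) + c1 • (e2*e0) + c2 • (e3*e0) + c3 • (e2*e3) + c4 • (e3*e1) + c5 • (e1*e2))*e3)*e1) * (e3*e1) = algebraMap ℝ A (-(4*c4)) := by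
    rw [Algebra.algebraMap_eq_smul_one]
    simp only [mul_add, add_mul, sub_mul, mul_sub, mul_neg, neg_mul, neg_neg,
      smul_mul_assoc, mul_smul_comm, mul_assoc, s01, s02, s03, s12, s13, s23,
      m00, m11, m22, m33, h00, h11, h22, h33, h01, h02, h03, h12, h13, h23,
      mul_one, one_mul, smul_neg]
    module
  rw [h] at E4
  simp only [mul_zero, zero_mul, add_zero, zero_add, sub_zero, neg_zero, sub_self] at E4
  have hz4 : c4 = 0 := by have := key _ E4.symm; linarith
  have E5 : ((c0 • (e1*e0) + c1 • (e2*e0) + c2 • (e3*e0) + c3 • (e2*e3) + c4 • (e3*e1) + c5 • (e1*e2)) - e1*(c0 • (e1*e0) + c1 • (e2*e0) + c2 • (e3*e0) + c3 • (e2*e3) + c4 • (e3*e1) + c5 • (e1*e2))*e1 - e2*(c0 • (e1*e0) + c1 • (e2*e0) + c2 • (e3*e0) + c3 • (e2*e3) + c4 • (e3*e1) + c5 • (e1*e2))*e2 + e1*(e2*(c0 • (e1*e0) + c1 • (e2*e0) + c2 • (e3*e0) + c3 • (e2*e3) + c4 • (e3*e1) + c5 • (e1*e2))*e2)*e1) *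 (e1*e2) = algebraMap ℝ A (-(4*c5)) := by
    rw [Algebra.algebraMap_eq_smul_one]
    simp only [mul_add, add_mul, sub_mul, mul_sub, mul_neg, neg_mul, neg_neg,
      smul_mul_assoc, mul_smul_comm, mul_assoc, s01, s02, s03, s12, s13, s23,
      m00, m11, m22, m33, h00, h11, h22, h33, h01, h02, h03, h12, h13, h23,
      mul_one, one_mul, smul_neg]
    module
  rw [h] at E5
  simp only [mul_zero, zero_mul, add_zero, zero_add, sub_zero, neg_zero, sub_self] at E5
  have hz5 : c5 = 0 := by have := key _ E5.symm; linarith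
  exact ⟨hz0, hz1, hz2, hz3, hz4, hz5⟩

lemma comm6 {A : Type*} [Ring A] [Algebra ℝ A] (e0 e1 e2 e3 : A)
    (h00 : e0 * e0 = -1) (h11 : e1 * e1 = 1) (h22 : e2 * e2 = 1)
    (h33 : e3 * e3 = 1)
    (h01 : e0 * e1 = -(e1 * e0)) (h02 : e0 * e2 = -(e2 * e0))
    (h03 : e0 * e3 = -(e3 * e0)) (h12 : e1 * e2 = -(e2 * e1))
    (h13 : e1 * e3 = -(e3 * e1)) (h23 : e2 * e3 = -(e3 * e2))
    (x y : Fin 6 → ℝ) :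
    bivH3 e0 e1 e2 e3 x * bivH3 e0 e1 e2 e3 y
      - bivH3 e0 e1 e2 e3 y * bivH3 e0 e1 e2 e3 x =
      (2*(x 2*y 4 - x 4*y 2 + x 5*y 1 - x 1*y 5)) • (e1*e0)
      + (2*(x 0*y 5 - x 5*y 0 + x 3*y 2 - x 2*y 3)) • (e2*e0)
      + (2*(x 1*y 3 - x 3*y 1 + x 4*y 0 - x 0*y 4)) • (e3*e0)
      + (2*(x 1*y 2 - x 2*y 1 - x 4*y 5 + x 5*y 4)) • (e2*e3)
      + (2*(x 2*y 0 - x 0*y 2 + x 3*y 5 - x 5*y 3)) • (e3*e1)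
      + (2*(x 0*y 1 - x 1*y 0 - x 3*y 4 + x 4*y 3)) • (e1*e2) := by
  have s01 : ∀ x : A, e0*(e1*x) = -(e1*(e0*x)) := fun x => by
    rw [← mul_assoc, h01, neg_mul, mul_assoc]
  have s02 : ∀ x : A, e0*(e2*x) = -(e2*(e0*x)) := fun x => by
    rw [← mul_assoc, h02, neg_mul, mul_assoc]
  have s03 : ∀ x : A, e0*(e3*x) = -(e3*(e0*x)) := fun x => by
    rw [← mul_assoc, h03, neg_mul, mul_assoc]
  have s12 : ∀ x : A, e1*(e2*x) = -(e2*(e1*x)) := fun x => by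
    rw [← mul_assoc, h12, neg_mul, mul_assoc]
  have s13 : ∀ x : A, e1*(e3*x) = -(e3*(e1*x)) := fun x => by
    rw [← mul_assoc, h13, neg_mul, mul_assoc]
  have s23 : ∀ x : A, e2*(e3*x) = -(e3*(e2*x)) := fun x => by
    rw [← mul_assoc, h23, neg_mul, mul_assoc]
  have m00 : ∀ x : A, e0*(e0*x) = -x := fun x => by
    rw [← mul_assoc, h00, neg_one_mul]
  have m11 : ∀ x : A, e1*(e1*x) = x := fun x => by
    rw [← mul_assoc, h11, one_mul]
  have m22 : ∀ x : A, e2*(e2*x) = x := fun x => by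
    rw [← mul_assoc, h22, one_mul]
  have m33 : ∀ x : A, e3*(e3*x) = x := fun x => by
    rw [← mul_assoc, h33, one_mul]
  simp only [bivH3]
  simp only [mul_add, add_mul, sub_mul, mul_sub, mul_neg, neg_mul, neg_neg,
    smul_mul_assoc, mul_smul_comm, mul_assoc, s01, s02, s03, s12, s13, s23,
    m00, m11, m22, m33, h00, h11, h22, h33, h01, h02, h03, h12, h13, h23,
    mul_one, one_mul, smul_neg]
  module
theorem stmt_16 {A : Type*} [Ring A] [Algebra ℝ A] (e0 e1 e2 e3 : A)
    (h00 : e0 * e0 = -1) (h11 : e1 * e1 = 1) (h22 : e2 * e2 = 1)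
    (h33 : e3 * e3 = 1)
    (h01 : e0 * e1 = -(e1 * e0)) (h02 : e0 * e2 = -(e2 * e0))
    (h03 : e0 * e3 = -(e3 * e0)) (h12 : e1 * e2 = -(e2 * e1))
    (h13 : e1 * e3 = -(e3 * e1)) (h23 : e2 * e3 = -(e3 * e2))
    (hinj : Function.Injective (algebraMap ℝ A))
    (p : Fin 6 → ℝ) (hns : pluckH3 p ≠ 0) :
    -(2 * pluckH3 p) ^ 2 < 0 ∧
    ∃! q : (Fin 6 → ℝ) × (Fin 6 → ℝ),
      bivH3 e0 e1 e2 e3 q.1 + bivH3 e0 e1 e2 e3 q.2 = bivH3 e0 e1 e2 e3 p ∧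
      bivH3 e0 e1 e2 e3 q.1 * bivH3 e0 e1 e2 e3 q.2 =
        bivH3 e0 e1 e2 e3 q.2 * bivH3 e0 e1 e2 e3 q.1 ∧
      pluckH3 q.1 = 0 ∧ pluckH3 q.2 = 0 ∧
      sqH3 q.1 =
        (sqH3 p - Real.sqrt ((sqH3 p) ^ 2 + (2 * pluckH3 p) ^ 2)) / 2 ∧
      sqH3 q.2 =
        (sqH3 p + Real.sqrt ((sqH3 p) ^ 2 + (2 * pluckH3 p) ^ 2)) / 2 ∧
      sqH3 q.1 < 0 ∧ 0 < sqH3 q.2 := by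
  have h2k : 2 * pluckH3 p ≠ 0 := mul_ne_zero two_ne_zero hns
  have hk2 : 0 < (2 * pluckH3 p) ^ 2 :=
    lt_of_le_of_ne (sq_nonneg _) (Ne.symm (pow_ne_zero 2 h2k))
  refine ⟨by nlinarith [hk2], ?_⟩
  set r := Real.sqrt (sqH3 p ^ 2 + (2 * pluckH3 p) ^ 2) with hrdef
  have hr2 : r ^ 2 = sqH3 p ^ 2 + (2 * pluckH3 p) ^ 2 :=
    Real.sq_sqrt (by positivity)
  have hrpos : 0 < r := Real.sqrt_pos.mpr (by nlinarith [sq_nonneg (sqH3 p)])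
  have hr0 : r ≠ 0 := ne_of_gt hrpos
  have hsr1 : sqH3 p < r := by nlinarith [hr2, hk2, hrpos]
  have hsr2 : -r < sqH3 p := by nlinarith [hr2, hk2, hrpos]
  have rcancel : ∀ X : ℝ, X * r^2 = 0 → X = 0 := by
    intro X hX
    rcases mul_eq_zero.mp hX with h | h
    · exact h
    · exact absurd h (pow_ne_zero 2 hr0)
  have hr2' : r ^ 2 = (p 0^2 + p 1^2 + p 2^2 - p 3^2 - p 4^2 - p 5^2)^2 + (2*(p 0*p 3 + p 1*p 4 + p 2*p 5))^2 := by
    rw [hr2]; simp only [sqH3, pluckH3]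
  have hK0 : (p 0*p 3 + p 1*p 4 + p 2*p 5) ≠ 0 := by
    have h9 := hns; simp only [pluckH3] at h9; exact h9
  have hKsq : 0 < ((p 0*p 3 + p 1*p 4 + p 2*p 5))^2 := lt_of_le_of_ne (sq_nonneg _) (Ne.symm (pow_ne_zero 2 hK0))
  have hD : (0:ℝ) < (p 0^2 + p 1^2 + p 2^2 + p 3^2 + p 4^2 + p 5^2) := by
    nlinarith [hKsq, sq_nonneg (p 0 - p 3), sq_nonneg (p 0 + p 3), sq_nonneg (p 1 - p 4),
      sq_nonneg (p 1 + p 4), sq_nonneg (p 2 - p 5), sq_nonneg (p 2 + p 5)]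
  have hD0 : (p 0^2 + p 1^2 + p 2^2 + p 3^2 + p 4^2 + p 5^2) ≠ (0:ℝ) := ne_of_gt hD
  set u : Fin 6 → ℝ := ![((r - (p 0^2 + p 1^2 + p 2^2 - p 3^2 - p 4^2 - p 5^2))/2 * p 0 - (p 0*p 3 + p 1*p 4 + p 2*p 5)*p 3)/r, ((r - (p 0^2 + p 1^2 + p 2^2 - p 3^2 - p 4^2 - p 5^2))/2 * p 1 - (p 0*p 3 + p 1*p 4 + p 2*p 5)*p 4)/r, ((r - (p 0^2 + p 1^2 + p 2^2 - p 3^2 - p 4^2 - p 5^2))/2 * p 2 - (p 0*p 3 + p 1*p 4 + p 2*p 5)*p 5)/r, ((r - (p 0^2 + p 1^2 + p 2^2 - p 3^2 - p 4^2 - p 5^2))/2 * p 3 + (p 0*p 3 + p 1*p 4 + p 2*p 5)*p 0)/r, ((r - (p 0^2 + p 1^2 + p 2^2 - p 3^2 - p 4^2 - p 5^2))/2 * p 4 + (p 0*p 3 + p 1*p 4 + p 2*p 5)*p 1)/r, ((r - (p 0^2 + p 1^2 + p 2^2 - p 3^2 - p 4^2 - p 5^2))/2 * p 5 + (p 0*p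 3 + p 1*p 4 + p 2*p 5)*p 2)/r] with hudef
  set v : Fin 6 → ℝ := fun i => p i - u i with hvdef
  have hv : ∀ i, v i = p i - u i := fun i => by simp only [hvdef]
  have hu0 : u 0 = ((r - (p 0^2 + p 1^2 + p 2^2 - p 3^2 - p 4^2 - p 5^2))/2 * p 0 - (p 0*p 3 + p 1*p 4 + p 2*p 5)*p 3)/r := by rw [hudef]; rfl
  have hru0 : r * u 0 = ((r - (p 0^2 + p 1^2 + p 2^2 - p 3^2 - p 4^2 - p 5^2))/2 * p 0 - (p 0*p 3 + p 1*p 4 + p 2*p 5)*p 3) := by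
    rw [hu0, mul_comm, div_mul_cancel₀ _ hr0]
  have hrv0 : r * v 0 = ((r + (p 0^2 + p 1^2 + p 2^2 - p 3^2 - p 4^2 - p 5^2))/2 * p 0 + (p 0*p 3 + p 1*p 4 + p 2*p 5)*p 3) := by
    rw [hv, mul_sub, hru0]; ring
  have hu1 : u 1 = ((r - (p 0^2 + p 1^2 + p 2^2 - p 3^2 - p 4^2 - p 5^2))/2 * p 1 - (p 0*p 3 + p 1*p 4 + p 2*p 5)*p 4)/r := by rw [hudef]; rfl
  have hru1 : r * u 1 = ((r - (p 0^2 + p 1^2 + p 2^2 - p 3^2 - p 4^2 - p 5^2))/2 * p 1 - (p 0*p 3 + p 1*p 4 + p 2*p 5)*p 4) := by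
    rw [hu1, mul_comm, div_mul_cancel₀ _ hr0]
  have hrv1 : r * v 1 = ((r + (p 0^2 + p 1^2 + p 2^2 - p 3^2 - p 4^2 - p 5^2))/2 * p 1 + (p 0*p 3 + p 1*p 4 + p 2*p 5)*p 4) := by
    rw [hv, mul_sub, hru1]; ring
  have hu2 : u 2 = ((r - (p 0^2 + p 1^2 + p 2^2 - p 3^2 - p 4^2 - p 5^2))/2 * p 2 - (p 0*p 3 + p 1*p 4 + p 2*p 5)*p 5)/r := by rw [hudef]; rfl
  have hru2 : r * u 2 = ((r - (p 0^2 + p 1^2 + p 2^2 - p 3^2 - p 4^2 - p 5^2))/2 * p 2 - (p 0*p 3 + p 1*p 4 + p 2*p 5)*p 5) := by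
    rw [hu2, mul_comm, div_mul_cancel₀ _ hr0]
  have hrv2 : r * v 2 = ((r + (p 0^2 + p 1^2 + p 2^2 - p 3^2 - p 4^2 - p 5^2))/2 * p 2 + (p 0*p 3 + p 1*p 4 + p 2*p 5)*p 5) := by
    rw [hv, mul_sub, hru2]; ring
  have hu3 : u 3 = ((r - (p 0^2 + p 1^2 + p 2^2 - p 3^2 - p 4^2 - p 5^2))/2 * p 3 + (p 0*p 3 + p 1*p 4 + p 2*p 5)*p 0)/r := by rw [hudef]; rfl
  have hru3 : r * u 3 = ((r - (p 0^2 + p 1^2 + p 2^2 - p 3^2 - p 4^2 - p 5^2))/2 * p 3 + (p 0*p 3 + p 1*p 4 + p 2*p 5)*p 0) := by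
    rw [hu3, mul_comm, div_mul_cancel₀ _ hr0]
  have hrv3 : r * v 3 = ((r + (p 0^2 + p 1^2 + p 2^2 - p 3^2 - p 4^2 - p 5^2))/2 * p 3 - (p 0*p 3 + p 1*p 4 + p 2*p 5)*p 0) := by
    rw [hv, mul_sub, hru3]; ring
  have hu4 : u 4 = ((r - (p 0^2 + p 1^2 + p 2^2 - p 3^2 - p 4^2 - p 5^2))/2 * p 4 + (p 0*p 3 + p 1*p 4 + p 2*p 5)*p 1)/r := by rw [hudef]; rfl
  have hru4 : r * u 4 = ((r - (p 0^2 + p 1^2 + p 2^2 - p 3^2 - p 4^2 - p 5^2))/2 * p 4 + (p 0*p 3 + p 1*p 4 + p 2*p 5)*p 1) := by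
    rw [hu4, mul_comm, div_mul_cancel₀ _ hr0]
  have hrv4 : r * v 4 = ((r + (p 0^2 + p 1^2 + p 2^2 - p 3^2 - p 4^2 - p 5^2))/2 * p 4 - (p 0*p 3 + p 1*p 4 + p 2*p 5)*p 1) := by
    rw [hv, mul_sub, hru4]; ring
  have hu5 : u 5 = ((r - (p 0^2 + p 1^2 + p 2^2 - p 3^2 - p 4^2 - p 5^2))/2 * p 5 + (p 0*p 3 + p 1*p 4 + p 2*p 5)*p 2)/r := by rw [hudef]; rfl
  have hru5 : r * u 5 = ((r - (p 0^2 + p 1^2 + p 2^2 - p 3^2 - p 4^2 - p 5^2))/2 * p 5 + (p 0*p 3 + p 1*p 4 + p 2*p 5)*p 2) := by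
    rw [hu5, mul_comm, div_mul_cancel₀ _ hr0]
  have hrv5 : r * v 5 = ((r + (p 0^2 + p 1^2 + p 2^2 - p 3^2 - p 4^2 - p 5^2))/2 * p 5 - (p 0*p 3 + p 1*p 4 + p 2*p 5)*p 2) := by
    rw [hv, mul_sub, hru5]; ring
  have FQu : pluckH3 u = 0 := by
    apply rcancel
    have h9 : pluckH3 u * r^2 = (r*u 0)*(r*u 3) + (r*u 1)*(r*u 4) + (r*u 2)*(r*u 5) := by
      simp only [pluckH3]; ring
    rw [hru0, hru1, hru2, hru3, hru4, hru5] at h9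
    rw [h9]
    linear_combination ((p 0*p 3 + p 1*p 4 + p 2*p 5)/4) * hr2'
  have FQv : pluckH3 v = 0 := by
    apply rcancel
    have h9 : pluckH3 v * r^2 = (r*v 0)*(r*v 3) + (r*v 1)*(r*v 4) + (r*v 2)*(r*v 5) := by
      simp only [pluckH3]; ring
    rw [hrv0, hrv1, hrv2, hrv3, hrv4, hrv5] at h9
    rw [h9]
    linear_combination ((p 0*p 3 + p 1*p 4 + p 2*p 5)/4) * hr2'
  have FSu : sqH3 u = (sqH3 p - r)/2 := by
    have h9 : sqH3 u * r^2 = (r*u 0)^2 + (r*u 1)^2 + (r*u 2)^2 - (r*u 3)^2 - (r*u 4)^2 - (r*u 5)^2 := by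
      simp only [sqH3]; ring
    rw [hru0, hru1, hru2, hru3, hru4, hru5] at h9
    have h10 : sqH3 u * r^2 = (sqH3 p - r)/2 * r^2 := by
      rw [h9]; simp only [sqH3]
      linear_combination ((-1/4)*p 0^2 + (-1/4)*p 1^2 + (-1/4)*p 2^2 + (1/4)*p 3^2 + (1/4)*p 4^2 + (1/4)*p 5^2 + (1/2)*r) * hr2'
    exact mul_right_cancel₀ (pow_ne_zero 2 hr0) h10
  have FSv : sqH3 v = (sqH3 p + r)/2 := by
    have h9 : sqH3 v * r^2 = (r*v 0)^2 + (r*v 1)^2 + (r*v 2)^2 - (r*v 3)^2 - (r*v 4)^2 - (r*v 5)^2 := by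
      simp only [sqH3]; ring
    rw [hrv0, hrv1, hrv2, hrv3, hrv4, hrv5] at h9
    have h10 : sqH3 v * r^2 = (sqH3 p + r)/2 * r^2 := by
      rw [h9]; simp only [sqH3]
      linear_combination ((-1/4)*p 0^2 + (-1/4)*p 1^2 + (-1/4)*p 2^2 + (1/4)*p 3^2 + (1/4)*p 4^2 + (1/4)*p 5^2 + (-1/2)*r) * hr2'
    exact mul_right_cancel₀ (pow_ne_zero 2 hr0) h10
  have cz0 : (u 2*v 4 - u 4*v 2 + u 5*v 1 - u 1*v 5) = 0 := by
    apply rcancel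
    have h9 : (u 2*v 4 - u 4*v 2 + u 5*v 1 - u 1*v 5) * r^2 = (r*u 2)*(r*v 4) - (r*u 4)*(r*v 2) + (r*u 5)*(r*v 1) - (r*u 1)*(r*v 5) := by ring
    rw [hru2, hru4, hru5, hru1, hrv4, hrv2, hrv1, hrv5] at h9
    rw [h9]; ring
  have cz1 : (u 0*v 5 - u 5*v 0 + u 3*v 2 - u 2*v 3) = 0 := by
    apply rcancel
    have h9 : (u 0*v 5 - u 5*v 0 + u 3*v 2 - u 2*v 3) * r^2 = (r*u 0)*(r*v 5) - (r*u 5)*(r*v 0) + (r*u 3)*(r*v 2) - (r*u 2)*(r*v 3) := by ring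
    rw [hru0, hru5, hru3, hru2, hrv5, hrv0, hrv2, hrv3] at h9
    rw [h9]; ring
  have cz2 : (u 1*v 3 - u 3*v 1 + u 4*v 0 - u 0*v 4) = 0 := by
    apply rcancel
    have h9 : (u 1*v 3 - u 3*v 1 + u 4*v 0 - u 0*v 4) * r^2 = (r*u 1)*(r*v 3) - (r*u 3)*(r*v 1) + (r*u 4)*(r*v 0) - (r*u 0)*(r*v 4) := by ring
    rw [hru1, hru3, hru4, hru0, hrv3, hrv1, hrv0, hrv4] at h9
    rw [h9]; ring
  have cz3 : (u 1*v 2 - u 2*v 1 - u 4*v 5 + u 5*v 4) = 0 := by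
    apply rcancel
    have h9 : (u 1*v 2 - u 2*v 1 - u 4*v 5 + u 5*v 4) * r^2 = (r*u 1)*(r*v 2) - (r*u 2)*(r*v 1) - (r*u 4)*(r*v 5) + (r*u 5)*(r*v 4) := by ring
    rw [hru1, hru2, hru4, hru5, hrv2, hrv1, hrv5, hrv4] at h9
    rw [h9]; ring
  have cz4 : (u 2*v 0 - u 0*v 2 + u 3*v 5 - u 5*v 3) = 0 := by
    apply rcancel
    have h9 : (u 2*v 0 - u 0*v 2 + u 3*v 5 - u 5*v 3) * r^2 = (r*u 2)*(r*v 0) - (r*u 0)*(r*v 2) + (r*u 3)*(r*v 5) - (r*u 5)*(r*v 3) := by ring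
    rw [hru2, hru0, hru3, hru5, hrv0, hrv2, hrv5, hrv3] at h9
    rw [h9]; ring
  have cz5 : (u 0*v 1 - u 1*v 0 - u 3*v 4 + u 4*v 3) = 0 := by
    apply rcancel
    have h9 : (u 0*v 1 - u 1*v 0 - u 3*v 4 + u 4*v 3) * r^2 = (r*u 0)*(r*v 1) - (r*u 1)*(r*v 0) - (r*u 3)*(r*v 4) + (r*u 4)*(r*v 3) := by ring
    rw [hru0, hru1, hru3, hru4, hrv1, hrv0, hrv4, hrv3] at h9
    rw [h9]; ring
  have hcomm6 := comm6 e0 e1 e2 e3 h00 h11 h22 h33 h01 h02 h03 h12 h13 h23 u v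
  rw [cz0, cz1, cz2, cz3, cz4, cz5] at hcomm6
  simp only [mul_zero, zero_smul, add_zero, zero_add] at hcomm6
  have hcommuv : bivH3 e0 e1 e2 e3 u * bivH3 e0 e1 e2 e3 v
      = bivH3 e0 e1 e2 e3 v * bivH3 e0 e1 e2 e3 u := sub_eq_zero.mp hcomm6
  have hsumuv : bivH3 e0 e1 e2 e3 u + bivH3 e0 e1 e2 e3 v = bivH3 e0 e1 e2 e3 p := by
    simp only [bivH3, hv]
    module
  refine ⟨(u, v), ⟨hsumuv, hcommuv, FQu, FQv, FSu, FSv, by rw [FSu]; linarith only [hsr1], by rw [FSv]; linarith only [hsr2]⟩, ?_⟩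
  rintro ⟨x, y⟩ ⟨hsum, hcom, hQx, hQy, hSx, hSy, hneg, hpos⟩
  dsimp only at hsum hcom hQx hQy hSx hSy hneg hpos
  have hdiff : (x 0 + y 0 - p 0) • (e1*e0) + (x 1 + y 1 - p 1) • (e2*e0) + (x 2 + y 2 - p 2) • (e3*e0) + (x 3 + y 3 - p 3) • (e2*e3) + (x 4 + y 4 - p 4) • (e3*e1) + (x 5 + y 5 - p 5) • (e1*e2)
      = (bivH3 e0 e1 e2 e3 x + bivH3 e0 e1 e2 e3 y) - bivH3 e0 e1 e2 e3 p := by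
    simp only [bivH3]; module
  rw [hsum, sub_self] at hdiff
  obtain ⟨g0, g1, g2, g3, g4, g5⟩ := indep6 e0 e1 e2 e3 h00 h11 h22 h33 h01 h02 h03 h12 h13 h23 hinj _ _ _ _ _ _ hdiff
  have hy0 : y 0 = p 0 - x 0 := by linear_combination g0
  have hy1 : y 1 = p 1 - x 1 := by linear_combination g1
  have hy2 : y 2 = p 2 - x 2 := by linear_combination g2
  have hy3 : y 3 = p 3 - x 3 := by linear_combination g3
  have hy4 : y 4 = p 4 - x 4 := by linear_combination g4
  have hy5 : y 5 = p 5 - x 5 := by linear_combination g5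
  have hcm := comm6 e0 e1 e2 e3 h00 h11 h22 h33 h01 h02 h03 h12 h13 h23 x y
  rw [hcom, sub_self] at hcm
  obtain ⟨w0, w1, w2, w3, w4, w5⟩ := indep6 e0 e1 e2 e3 h00 h11 h22 h33 h01 h02 h03 h12 h13 h23 hinj _ _ _ _ _ _ hcm.symm
  have hc0 : (x 2*p 4 - x 4*p 2 + x 5*p 1 - x 1*p 5) = 0 := by
    simp only [hy0, hy1, hy2, hy3, hy4, hy5] at w0
    linear_combination w0/2
  have hc1 : (x 0*p 5 - x 5*p 0 + x 3*p 2 - x 2*p 3) = 0 := by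
    simp only [hy0, hy1, hy2, hy3, hy4, hy5] at w1
    linear_combination w1/2
  have hc2 : (x 1*p 3 - x 3*p 1 + x 4*p 0 - x 0*p 4) = 0 := by
    simp only [hy0, hy1, hy2, hy3, hy4, hy5] at w2
    linear_combination w2/2
  have hc3 : (x 1*p 2 - x 2*p 1 - x 4*p 5 + x 5*p 4) = 0 := by
    simp only [hy0, hy1, hy2, hy3, hy4, hy5] at w3
    linear_combination w3/2
  have hc4 : (x 2*p 0 - x 0*p 2 + x 3*p 5 - x 5*p 3) = 0 := by
    simp only [hy0, hy1, hy2, hy3, hy4, hy5] at w4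
    linear_combination w4/2
  have hc5 : (x 0*p 1 - x 1*p 0 - x 3*p 4 + x 4*p 3) = 0 := by
    simp only [hy0, hy1, hy2, hy3, hy4, hy5] at w5
    linear_combination w5/2
  set al := (x 0*p 0 + x 1*p 1 + x 2*p 2 + x 3*p 3 + x 4*p 4 + x 5*p 5)/(p 0^2 + p 1^2 + p 2^2 + p 3^2 + p 4^2 + p 5^2) with hal
  set be := (x 0*p 3 - x 3*p 0 + x 1*p 4 - x 4*p 1 + x 2*p 5 - x 5*p 2)/(p 0^2 + p 1^2 + p 2^2 + p 3^2 + p 4^2 + p 5^2) with hbe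
  have hx0 : x 0 = al * p 0 + be * p 3 := by
    rw [hal, hbe, div_mul_eq_mul_div, div_mul_eq_mul_div, ← add_div, eq_div_iff hD0]
    linear_combination (-(p 4)) * hc2 + (p 1) * hc5 + (p 5) * hc1 + (-(p 2)) * hc4
  have hx1 : x 1 = al * p 1 + be * p 4 := by
    rw [hal, hbe, div_mul_eq_mul_div, div_mul_eq_mul_div, ← add_div, eq_div_iff hD0]
    linear_combination (p 3) * hc2 + (-(p 0)) * hc5 + (-(p 5)) * hc0 + (p 2) * hc3
  have hx2 : x 2 = al * p 2 + be * p 5 := by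
    rw [hal, hbe, div_mul_eq_mul_div, div_mul_eq_mul_div, ← add_div, eq_div_iff hD0]
    linear_combination (-(p 3)) * hc1 + (p 0) * hc4 + (p 4) * hc0 + (-(p 1)) * hc3
  have hx3 : x 3 = al * p 3 - be * p 0 := by
    rw [hal, hbe, div_mul_eq_mul_div, div_mul_eq_mul_div, div_sub_div_same, eq_div_iff hD0]
    linear_combination (-(p 4)) * hc5 + (-(p 1)) * hc2 + (p 5) * hc4 + (p 2) * hc1
  have hx4 : x 4 = al * p 4 - be * p 1 := by
    rw [hal, hbe, div_mul_eq_mul_div, div_mul_eq_mul_div, div_sub_div_same, eq_div_iff hD0]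
    linear_combination (p 3) * hc5 + (p 0) * hc2 + (-(p 5)) * hc3 + (-(p 2)) * hc0
  have hx5 : x 5 = al * p 5 - be * p 2 := by
    rw [hal, hbe, div_mul_eq_mul_div, div_mul_eq_mul_div, div_sub_div_same, eq_div_iff hD0]
    linear_combination (-(p 3)) * hc4 + (-(p 0)) * hc1 + (p 4) * hc3 + (p 1) * hc0
  have t1 := hQx
  simp only [pluckH3] at t1
  rw [hx0, hx1, hx2, hx3, hx4, hx5] at t1
  have t2 := hQy
  simp only [pluckH3] at t2
  rw [hy0, hy1, hy2, hy3, hy4, hy5, hx0, hx1, hx2, hx3, hx4, hx5] at t2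
  have lin1 : (p 0*p 3 + p 1*p 4 + p 2*p 5)*(2*al - 1) - (p 0^2 + p 1^2 + p 2^2 - p 3^2 - p 4^2 - p 5^2)*be = 0 := by linear_combination t1 - t2
  have t3 := hSx
  simp only [sqH3] at t3
  rw [hx0, hx1, hx2, hx3, hx4, hx5] at t3
  have t4 := hSy
  simp only [sqH3] at t4
  rw [hy0, hy1, hy2, hy3, hy4, hy5, hx0, hx1, hx2, hx3, hx4, hx5] at t4
  have lin2 : (p 0^2 + p 1^2 + p 2^2 - p 3^2 - p 4^2 - p 5^2)*(2*al - 1) + 4*(p 0*p 3 + p 1*p 4 + p 2*p 5)*be = -r := by linear_combination t3 - t4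
  have h5 : r*(r*be + (p 0*p 3 + p 1*p 4 + p 2*p 5)) = 0 := by
    linear_combination (p 0*p 3 + p 1*p 4 + p 2*p 5)*lin2 - (p 0^2 + p 1^2 + p 2^2 - p 3^2 - p 4^2 - p 5^2)*lin1 + be*hr2'
  have hrbe : r*be = -(p 0*p 3 + p 1*p 4 + p 2*p 5) := by
    rcases mul_eq_zero.mp h5 with h | h
    · exact absurd h hr0
    · linear_combination h
  have h6 : r*(r*(2*al - 1) + (p 0^2 + p 1^2 + p 2^2 - p 3^2 - p 4^2 - p 5^2)) = 0 := by
    linear_combination 4*(p 0*p 3 + p 1*p 4 + p 2*p 5)*lin1 + (p 0^2 + p 1^2 + p 2^2 - p 3^2 - p 4^2 - p 5^2)*lin2 + (2*al - 1)*hr2'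
  have hral : 2*(r*al) = r - (p 0^2 + p 1^2 + p 2^2 - p 3^2 - p 4^2 - p 5^2) := by
    rcases mul_eq_zero.mp h6 with h | h
    · exact absurd h hr0
    · linear_combination h
  have hxu0 : x 0 = u 0 := by
    rw [hx0, hu0, eq_div_iff hr0]
    linear_combination (p 0/2) * hral + (p 3) * hrbe
  have hxu1 : x 1 = u 1 := by
    rw [hx1, hu1, eq_div_iff hr0]
    linear_combination (p 1/2) * hral + (p 4) * hrbe
  have hxu2 : x 2 = u 2 := by
    rw [hx2, hu2, eq_div_iff hr0]
    linear_combination (p 2/2) * hral + (p 5) * hrbe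
  have hxu3 : x 3 = u 3 := by
    rw [hx3, hu3, eq_div_iff hr0]
    linear_combination (p 3/2) * hral - (p 0) * hrbe
  have hxu4 : x 4 = u 4 := by
    rw [hx4, hu4, eq_div_iff hr0]
    linear_combination (p 4/2) * hral - (p 1) * hrbe
  have hxu5 : x 5 = u 5 := by
    rw [hx5, hu5, eq_div_iff hr0]
    linear_combination (p 5/2) * hral - (p 2) * hrbe
  have hyv0 : y 0 = v 0 := by rw [hv 0, hy0, hxu0]
  have hyv1 : y 1 = v 1 := by rw [hv 1, hy1, hxu1]
  have hyv2 : y 2 = v 2 := by rw [hv 2, hy2, hxu2]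
  have hyv3 : y 3 = v 3 := by rw [hv 3, hy3, hxu3]
  have hyv4 : y 4 = v 4 := by rw [hv 4, hy4, hxu4]
  have hyv5 : y 5 = v 5 := by rw [hv 5, hy5, hxu5]
  have hxeq : x = u := by
    funext i
    fin_cases i
    · exact hxu0
    · exact hxu1
    · exact hxu2
    · exact hxu3
    · exact hxu4
    · exact hxu5
  have hyeq : y = v := by
    funext i
    fin_cases i
    · exact hyv0
    · exact hyv1
    · exact hyv2
    · exact hyv3
    · exact hyv4
    · exact hyv5
  rw [hxeq, hyeq]
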